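/- Let p ≥ 1 be an integer and ω = exp(2πi/p) ∈ ℂ. Then Σ_{j=1}^{p−1} ((1+ω^{−j})/(1−ω^{−j}))² = −(p−1)(p−2)/3 (an equality of complex numbers, the right-hand side being a rational number viewed in ℂ). -/

import Mathlib

open Finset

open Finset

lemma sum_id_c (n : ℕ) : ∑ k ∈ range n, (k:ℂ) = n*(n-1)/2 := by
  induction n with
  | zero => simp
  | succ n ih => rw [Finset.sum_range_succ, ih]; push_cast; ring

lemma sum_sq_c (n : ℕ) : ∑ k ∈ range n, (k:ℂ)^2 = n*(n-1)*(2*n-1)/6 := by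
  induction n with
  | zero => simp
  | succ n ih => rw [Finset.sum_range_succ, ih]; push_cast; ring

lemma telescope_c (z : ℂ) (n : ℕ) :
    (1 - z) * ∑ k ∈ range n, (k:ℂ) * z^k
      = (∑ k ∈ range n, z^k) - 1 - ((n:ℂ)-1) * z^n := by
  induction n with
  | zero => simp
  | succ n ih =>
    rw [Finset.sum_range_succ, Finset.sum_range_succ (f := fun k => z^k)]
    push_cast
    linear_combination ih

lemma geom_zero (z : ℂ) (hz : z ≠ 1) (p : ℕ) (hzp : z^p = 1) :
    ∑ k ∈ range p, z^k = 0 := by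
  rw [geom_sum_eq hz, hzp, sub_self, zero_div]

open Finset

lemma term_eq (z : ℂ) (hz : z ≠ 1) (p : ℕ) (hp0 : (p:ℂ) ≠ 0)
    (hA : (1 - z) * (∑ k ∈ range p, (k:ℂ) * z^k) = -(p:ℂ)) :
    ((1+z)/(1-z))^2 = 1 + (4/p) * (∑ k ∈ range p, (k:ℂ) * z^k)
      + (4/p^2) * ((∑ k ∈ range p, (k:ℂ) * z^k) * (∑ k ∈ range p, (k:ℂ) * z^k)) := by
  set A := ∑ k ∈ range p, (k:ℂ) * z^k with hAdef
  have h1 : (1:ℂ) - z ≠ 0 := sub_ne_zero.mpr (fun h => hz h.symm)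
  field_simp
  ring_nf
  linear_combination (-4*((1-z)*A - (p:ℂ)*z)) * hA

open Finset

lemma csum (p : ℕ) (hp : 1 ≤ p) (ω : ℂ) (hprim : IsPrimitiveRoot ω p) (m : ℕ) :
    ∑ j ∈ Icc 1 (p-1), (ω ^ (-(j:ℤ)))^m = if p ∣ m then (p:ℂ)-1 else -1 := by
  have hω0 : ω ≠ 0 := hprim.ne_zero (by omega)
  have hrw : ∀ j : ℕ, (ω ^ (-(j:ℤ)))^m = (ω ^ (-(m:ℤ)))^j := by
    intro j
    rw [← zpow_natCast (ω ^ (-(j:ℤ))) m, ← zpow_mul, ← zpow_natCast (ω ^ (-(m:ℤ))) j,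
      ← zpow_mul]
    ring_nf
  simp only [hrw]
  have hIcc : Icc 1 (p-1) = (range p).erase 0 := by
    ext x; simp [Finset.mem_erase, Finset.mem_range, Finset.mem_Icc]; omega
  rw [hIcc, Finset.sum_erase_eq_sub (by simp [Finset.mem_range]; omega)]
  have hwp : (ω ^ (-(m:ℤ)))^p = 1 := by
    rw [← zpow_natCast (ω ^ (-(m:ℤ))) p, ← zpow_mul, mul_comm, zpow_mul, zpow_natCast,
      hprim.pow_eq_one, one_zpow]
  by_cases hd : p ∣ m
  · have hw1 : ω ^ (-(m:ℤ)) = 1 := by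
      have : ω ^ m = 1 := (hprim.pow_eq_one_iff_dvd m).mpr hd
      rw [zpow_neg, zpow_natCast, this, inv_one]
    simp [hw1, hd]
  · have hw1 : ω ^ (-(m:ℤ)) ≠ 1 := by
      rw [zpow_neg, zpow_natCast]
      simp only [ne_eq, inv_eq_one]
      exact fun h => hd ((hprim.pow_eq_one_iff_dvd m).mp h)
    rw [geom_sum_eq hw1 p, hwp, sub_self, zero_div]
    simp [hd]


theorem eta_sig_lens_sum (p : ℕ) (hp : 1 ≤ p) (ω : ℂ)
    (hω : ω = Complex.exp (2 * Real.pi * Complex.I / p)) :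
    ∑ j ∈ Finset.Icc 1 (p - 1), ((1 + ω ^ (-(j : ℤ))) / (1 - ω ^ (-(j : ℤ)))) ^ 2 =
      -(((p : ℂ) - 1) * ((p : ℂ) - 2)) / 3 := by
  have hp0 : (p:ℂ) ≠ 0 := Nat.cast_ne_zero.mpr (by omega)
  have hprim : IsPrimitiveRoot ω p := by
    rw [hω]; exact Complex.isPrimitiveRoot_exp p (by omega)
  have hω0 : ω ≠ 0 := hprim.ne_zero (by omega)
  -- notation
  set A : ℕ → ℂ := fun j => ∑ k ∈ range p, (k:ℂ) * (ω ^ (-(j:ℤ)))^k with hAdef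
  -- z_j^p = 1 and z_j ≠ 1 for j in range
  have hzp : ∀ j : ℕ, (ω ^ (-(j:ℤ)))^p = 1 := by
    intro j
    rw [← zpow_natCast (ω ^ (-(j:ℤ))) p, ← zpow_mul, mul_comm, zpow_mul, zpow_natCast,
      hprim.pow_eq_one, one_zpow]
  have hz1 : ∀ j ∈ Icc 1 (p-1), ω ^ (-(j:ℤ)) ≠ 1 := by
    intro j hj
    simp only [Finset.mem_Icc] at hj
    rw [zpow_neg, zpow_natCast]
    simp only [ne_eq, inv_eq_one]
    intro h
    have := (hprim.pow_eq_one_iff_dvd j).mp h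
    have := Nat.le_of_dvd (by omega) this
    omega
  -- the relation (1-z)·A = -p
  have hA : ∀ j ∈ Icc 1 (p-1), (1 - ω ^ (-(j:ℤ))) * A j = -(p:ℂ) := by
    intro j hj
    rw [hAdef]
    rw [telescope_c, geom_zero _ (hz1 j hj) p (hzp j), hzp j]
    ring
  -- rewrite each term
  rw [Finset.sum_congr rfl (fun j hj => term_eq _ (hz1 j hj) p hp0 (hA j hj))]
  rw [Finset.sum_add_distrib, Finset.sum_add_distrib, ← Finset.mul_sum, ← Finset.mul_sum]
  -- card
  have hcard : ∑ _j ∈ Icc 1 (p-1), (1:ℂ) = (p:ℂ) - 1 := by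
    rw [Finset.sum_const, Nat.card_Icc, nsmul_eq_mul, mul_one]
    have h1 : p - 1 + 1 - 1 = p - 1 := by omega
    rw [h1, Nat.cast_sub (by omega : 1 ≤ p), Nat.cast_one]
  -- sum of A
  have hSA : ∑ j ∈ Icc 1 (p-1), A j = -((p:ℂ)*(p-1)/2) := by
    rw [hAdef]
    rw [Finset.sum_comm]
    have : ∀ k ∈ range p, ∑ j ∈ Icc 1 (p-1), (k:ℂ) * (ω ^ (-(j:ℤ)))^k
        = -(k:ℂ) := by
      intro k hk
      rw [← Finset.mul_sum, csum p hp ω hprim k]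
      simp only [Finset.mem_range] at hk
      rcases Nat.eq_zero_or_pos k with h0 | h0
      · subst h0; simp
      · have : ¬ p ∣ k := by
          intro hd; have := Nat.le_of_dvd h0 hd; omega
        rw [if_neg this]; ring
    rw [Finset.sum_congr rfl this, Finset.sum_neg_distrib, sum_id_c]
  -- sum of A·A
  have hSAA : ∑ j ∈ Icc 1 (p-1), A j * A j
      = -((p:ℂ)*(p-1)/2)^2 + (p:ℂ) * ((p:ℂ)*((p:ℂ)*(p-1)/2) - (p:ℂ)*(p-1)*(2*p-1)/6) := by
    have expand : ∀ j : ℕ, A j * A j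
        = ∑ k ∈ range p, ∑ l ∈ range p, (k:ℂ)*(l:ℂ) * (ω ^ (-(j:ℤ)))^(k+l) := by
      intro j
      rw [hAdef, Finset.sum_mul_sum]
      refine Finset.sum_congr rfl fun k _ => Finset.sum_congr rfl fun l _ => ?_
      rw [pow_add]; ring
    simp only [expand]
    rw [Finset.sum_comm]
    have swap2 : ∀ k ∈ range p, ∑ j ∈ Icc 1 (p-1), ∑ l ∈ range p,
          (k:ℂ)*(l:ℂ) * (ω ^ (-(j:ℤ)))^(k+l)
        = ∑ l ∈ range p, (k:ℂ)*(l:ℂ) * (if p ∣ (k+l) then (p:ℂ)-1 else -1) := by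
      intro k _
      rw [Finset.sum_comm]
      refine Finset.sum_congr rfl fun l _ => ?_
      rw [← Finset.mul_sum, csum p hp ω hprim (k+l)]
    rw [Finset.sum_congr rfl swap2]
    have key : ∀ k ∈ range p, ∀ l ∈ range p,
        (k:ℂ)*(l:ℂ) * (if p ∣ (k+l) then (p:ℂ)-1 else -1)
          = -((k:ℂ)*(l:ℂ)) + (p:ℂ) * (if l = p - k then (k:ℂ)*(l:ℂ) else 0) := by
      intro k hk l hl
      simp only [Finset.mem_range] at hk hl
      by_cases hkl : k + l = p
      · have hd : p ∣ (k+l) := by rw [hkl]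
        have hl' : l = p - k := by omega
        rw [if_pos hd, if_pos hl']; ring
      · have hl' : ¬ (l = p - k) := by omega
        rcases Nat.eq_zero_or_pos (k+l) with h0 | h0
        · have : k = 0 := by omega
          subst this; simp [hl']
        · have hd : ¬ p ∣ (k+l) := by
            intro hd
            have h1 := Nat.le_of_dvd h0 hd
            have h2 : p ∣ (k+l-p) := Nat.dvd_sub hd dvd_rfl
            rcases Nat.eq_zero_or_pos (k+l-p) with h3 | h3
            · omega
            · have := Nat.le_of_dvd h3 h2; omega
          rw [if_neg hd, if_neg hl']; ring
    rw [Finset.sum_congr rfl (fun k hk => Finset.sum_congr rfl (key k hk))]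
    simp only [Finset.sum_add_distrib, Finset.sum_neg_distrib]
    have inner2 : ∀ k ∈ range p, ∑ l ∈ range p,
        (p:ℂ) * (if l = p - k then (k:ℂ)*(l:ℂ) else 0)
          = (p:ℂ) * ((k:ℂ) * ((p:ℂ) - (k:ℂ))) := by
      intro k hk
      simp only [Finset.mem_range] at hk
      rw [← Finset.mul_sum, Finset.sum_ite_eq' (range p) (p-k) (fun l => (k:ℂ)*(l:ℂ))]
      rcases Nat.eq_zero_or_pos k with h0 | h0
      · subst h0
        simp
      · rw [if_pos (by simp [Finset.mem_range]; omega)]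
        rw [Nat.cast_sub (by omega)]
    rw [Finset.sum_congr rfl inner2]
    have hkl : ∑ k ∈ range p, ∑ l ∈ range p, (k:ℂ)*(l:ℂ)
        = (∑ k ∈ range p, (k:ℂ)) * (∑ l ∈ range p, (l:ℂ)) :=
      (Finset.sum_mul_sum _ _ _ _).symm
    rw [hkl, sum_id_c, ← Finset.mul_sum]
    have : ∑ k ∈ range p, (k:ℂ) * ((p:ℂ) - (k:ℂ))
        = (p:ℂ)*((p:ℂ)*(p-1)/2) - (p:ℂ)*(p-1)*(2*p-1)/6 := by
      have : ∀ k ∈ range p, (k:ℂ) * ((p:ℂ) - (k:ℂ)) = (p:ℂ)*(k:ℂ) - (k:ℂ)^2 := by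
        intro k _; ring
      rw [Finset.sum_congr rfl this, Finset.sum_sub_distrib, ← Finset.mul_sum,
        sum_id_c, sum_sq_c]
    rw [this]
    ring
  rw [hcard, hSA, hSAA]
  field_simp
  ring
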